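/- Let u : Ω → ℝ be a semiconcave viscosity solution of H(x, Du(x), u(x)) = 0 with H(x,·,w) strictly convex and C¹, and suppose ext(D⁺u(x)) = D*u(x) = {p ∈ D⁺u(x) : H(x,p,u(x)) = 0} for every x. Then for each x there is a unique p#(x) ∈ D⁺u(x) minimizing p ↦ H(x,p,u(x)) over D⁺u(x), and if x ∈ Σ(u) (D⁺u(x) is not a singleton), then H(x, p#(x), u(x)) < 0 and p#(x) ∈ D⁺u(x) \ D*u(x). -/

import Mathlib

open Set Filter Topology MeasureTheory

/-- The superdifferential of `u` at `x`, relative to the set `U`. -/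
def DplusOn {n : ℕ} (u : EuclideanSpace ℝ (Fin n) → ℝ) (U : Set (EuclideanSpace ℝ (Fin n)))
    (x : EuclideanSpace ℝ (Fin n)) : Set (EuclideanSpace ℝ (Fin n)) :=
  {p | ∀ ε > 0, ∀ᶠ y in nhdsWithin x U, u y - u x - (inner ℝ p (y - x) : ℝ) ≤ ε * ‖y - x‖}

/-- The set of reachable (limiting) gradients of `u` at `x` relative to `U`. -/
def Dstar {n : ℕ} (u : EuclideanSpace ℝ (Fin n) → ℝ) (U : Set (EuclideanSpace ℝ (Fin n)))
    (x : EuclideanSpace ℝ (Fin n)) : Set (EuclideanSpace ℝ (Fin n)) :=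
  {p | ∃ z : ℕ → EuclideanSpace ℝ (Fin n),
    (∀ i, z i ∈ U \ {x} ∧ DifferentiableAt ℝ u (z i)) ∧
    Tendsto z atTop (nhds x) ∧
    Tendsto (fun i => gradient u (z i)) atTop (nhds p)}

/-- `u` is semiconcave with linear modulus and constant `C` on the convex set `S`. -/
def SemiconcaveOn {n : ℕ} (u : EuclideanSpace ℝ (Fin n) → ℝ)
    (S : Set (EuclideanSpace ℝ (Fin n))) (C : ℝ) : Prop :=
  ∀ x ∈ S, ∀ y ∈ S, ∀ lam ∈ Set.Icc (0 : ℝ) 1,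
    lam * u x + (1 - lam) * u y - u (lam • x + (1 - lam) • y) ≤
      (C / 2) * lam * (1 - lam) * ‖x - y‖ ^ 2

/-- `u` is locally semiconcave on the open set `Ω`. -/
def LocallySemiconcaveOn {n : ℕ} (u : EuclideanSpace ℝ (Fin n) → ℝ)
    (Ω : Set (EuclideanSpace ℝ (Fin n))) : Prop :=
  ∀ x ∈ Ω, ∃ r > 0, ∃ C : ℝ, Metric.ball x r ⊆ Ω ∧ SemiconcaveOn u (Metric.ball x r) C


section Aux
open Metric
variable {n : ℕ}
local notation "E" => EuclideanSpace ℝ (Fin n)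

lemma combo_norm_sq (A B : E) (l : ℝ) :
    l * ‖A‖^2 + (1-l) * ‖B‖^2 - ‖l•A + (1-l)•B‖^2 = l*(1-l)*‖A-B‖^2 := by
  have h : ∀ v : E, ‖v‖^2 = inner ℝ v v := fun v => (real_inner_self_eq_norm_sq v).symm
  rw [h, h, h, h]
  simp only [inner_add_left, inner_add_right, inner_sub_left, inner_sub_right,
    real_inner_smul_left, real_inner_smul_right, real_inner_comm A B]
  ring


lemma concave_of_semiconcave {u : E → ℝ} {x : E} {r C : ℝ}
    (h : SemiconcaveOn u (ball x r) C) :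
    ConcaveOn ℝ (ball x r) (fun y => u y - C/2 * ‖y - x‖^2) := by
  refine ⟨convex_ball _ _, ?_⟩
  intro a ha b hb la mu hla hmu hsum
  have hmu' : mu = 1 - la := by linarith
  subst hmu'
  have key := h a ha b hb la ⟨hla, by linarith⟩
  have hxx : la•a + (1-la)•b - x = la•(a-x) + (1-la)•(b-x) := by
    have : (la + (1 - la)) • x = x := by rw [hsum, one_smul]
    rw [smul_sub, smul_sub]
    rw [show la • a - la • x + ((1-la) • b - (1-la) • x) = la•a + (1-la)•b - ((la + (1-la)) • x) by rw [add_smul]; abel, this]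
  have idq := combo_norm_sq (a - x) (b - x) la
  have hab : (a - x) - (b - x) = a - b := by abel
  rw [hab, ← hxx] at idq
  have idq2 := congrArg (fun t => C/2 * t) idq
  simp only [mul_sub, mul_add] at idq2
  simp only [smul_eq_mul]
  nlinarith [key, idq2]


lemma dplus_convex (u : E → ℝ) (U : Set E) (x : E) : Convex ℝ (DplusOn u U x) := by
  intro p hp q hq a b ha hb hab
  have hb' : b = 1 - a := by linarith
  subst hb'
  intro ε hε
  filter_upwards [hp ε hε, hq ε hε] with y h1 h2
  have hinner : (inner ℝ (a • p + (1-a) • q) (y - x) : ℝ)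
      = a * inner ℝ p (y - x) + (1-a) * inner ℝ q (y - x) := by
    rw [inner_add_left, real_inner_smul_left, real_inner_smul_left]
  rw [hinner]
  nlinarith [mul_le_mul_of_nonneg_left h1 ha, mul_le_mul_of_nonneg_left h2 hb]


lemma dplus_closed (u : E → ℝ) (U : Set E) (x : E) : IsClosed (DplusOn u U x) := by
  rw [← closure_subset_iff_isClosed]
  intro p hpcl ε hε
  obtain ⟨q, hq, hdq⟩ := Metric.mem_closure_iff.1 hpcl (ε/2) (by linarith)
  filter_upwards [hq (ε/2) (by linarith)] with y h1
  have h2 : (inner ℝ (q - p) (y - x) : ℝ) ≤ ε/2 * ‖y - x‖ := by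
    calc (inner ℝ (q - p) (y - x) : ℝ) ≤ ‖q - p‖ * ‖y - x‖ := real_inner_le_norm _ _
    _ ≤ ε/2 * ‖y - x‖ := by
        apply mul_le_mul_of_nonneg_right _ (norm_nonneg _)
        rw [← dist_eq_norm] at *
        rw [dist_comm]
        exact hdq.le
  have h3 : (inner ℝ q (y - x) : ℝ) - inner ℝ p (y - x) = inner ℝ (q - p) (y - x) := by
    rw [inner_sub_left]
  linarith


lemma exists_supergradient {s : Set (EuclideanSpace ℝ (Fin n))} (hs : IsOpen s)
    {v : EuclideanSpace ℝ (Fin n) → ℝ} (hv : ConcaveOn ℝ s v)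
    {x : EuclideanSpace ℝ (Fin n)} (hx : x ∈ s) :
    ∃ p : EuclideanSpace ℝ (Fin n), ∀ y ∈ s, v y ≤ v x + (inner ℝ p (y - x) : ℝ) := by
  have hvc : ContinuousOn v s := hv.continuousOn hs
  set O : Set (EuclideanSpace ℝ (Fin n) × ℝ) := {z | z.1 ∈ s ∧ z.2 < v z.1} with hO
  have hOopen : IsOpen O := by
    rw [isOpen_iff_mem_nhds]
    rintro ⟨y, t⟩ ⟨hy, ht⟩
    have hcy : ContinuousAt v y := hvc.continuousAt (hs.mem_nhds hy)
    obtain ⟨m, hm1, hm2⟩ := exists_between ht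
    have h1 : {w | m < v w} ∈ 𝓝 y := hcy.preimage_mem_nhds (Ioi_mem_nhds hm2)
    have h2 : (s ∩ {w | m < v w}) ×ˢ Iio m ∈ 𝓝 ((y, t) : EuclideanSpace ℝ (Fin n) × ℝ) :=
      prod_mem_nhds (inter_mem (hs.mem_nhds hy) h1) (Iio_mem_nhds hm1)
    filter_upwards [h2] with z hz
    exact ⟨hz.1.1, hz.2.trans hz.1.2⟩
  have hOconv : Convex ℝ O := by
    rintro ⟨y1, t1⟩ ⟨hy1, ht1⟩ ⟨y2, t2⟩ ⟨hy2, ht2⟩ a b ha hb hab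
    refine ⟨hv.1 hy1 hy2 ha hb hab, ?_⟩
    have hle := hv.2 hy1 hy2 ha hb hab
    simp only [smul_eq_mul] at hle ⊢
    have : a * t1 + b * t2 < a * v y1 + b * v y2 := by
      rcases eq_or_lt_of_le ha with rfl | ha'
      · simp only [zero_mul, zero_add]
        have hb1 : b = 1 := by linarith
        nlinarith
      · nlinarith [mul_le_mul_of_nonneg_left ht2.le hb]
    exact this.trans_le hle
  have hxO : ((x, v x) : EuclideanSpace ℝ (Fin n) × ℝ) ∉ O := fun h => lt_irrefl _ h.2
  obtain ⟨f, hf⟩ := geometric_hahn_banach_open_point hOconv hOopen hxO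
  set c : ℝ := f (0, 1) with hc
  set g : EuclideanSpace ℝ (Fin n) → ℝ := fun y => f (y, 0) with hg
  have hdecomp : ∀ (y : EuclideanSpace ℝ (Fin n)) (t : ℝ), f (y, t) = g y + t * c := by
    intro y t
    have : ((y, t) : EuclideanSpace ℝ (Fin n) × ℝ) = (y, 0) + t • ((0 : EuclideanSpace ℝ (Fin n)), (1 : ℝ)) := by
      simp [Prod.ext_iff]
    rw [this, map_add, _root_.map_smul, smul_eq_mul, hg, hc]
  have hcpos : 0 < c := by
    have h1 := hf (x, v x - 1) ⟨hx, by show v x - 1 < v x; linarith⟩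
    rw [hdecomp, hdecomp] at h1
    nlinarith
  have key : ∀ y ∈ s, ∀ t < v y, g y + t * c < g x + v x * c := by
    intro y hy t ht
    have := hf (y, t) ⟨hy, ht⟩
    rwa [hdecomp, hdecomp] at this
  have key2 : ∀ y ∈ s, g y + v y * c ≤ g x + v x * c := by
    intro y hy
    by_contra hlt
    push_neg at hlt
    set D := g y + v y * c - (g x + v x * c) with hD
    have hDpos : 0 < D := by simp only [hD]; linarith
    have ht : v y - D / (2 * c) < v y := by
      have : 0 < D / (2 * c) := div_pos hDpos (by linarith)
      linarith
    have h1 := key y hy _ ht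
    have h2 : (v y - D / (2 * c)) * c = v y * c - D / 2 := by
      field_simp
    rw [h2] at h1
    simp only [hD] at h1
    linarith
  refine ⟨(InnerProductSpace.toDual ℝ (EuclideanSpace ℝ (Fin n))).symm
      ((-c⁻¹) • (f.comp (ContinuousLinearMap.inl ℝ (EuclideanSpace ℝ (Fin n)) ℝ))), ?_⟩
  intro y hy
  have hip : (inner ℝ ((InnerProductSpace.toDual ℝ (EuclideanSpace ℝ (Fin n))).symm
      ((-c⁻¹) • (f.comp (ContinuousLinearMap.inl ℝ (EuclideanSpace ℝ (Fin n)) ℝ)))) (y - x) : ℝ)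
      = -c⁻¹ * g (y - x) := by
    rw [InnerProductSpace.toDual_symm_apply]
    simp [hg]
  rw [hip]
  have hgsub : g (y - x) = g y - g x := by
    simp only [hg]
    have : ((y - x : EuclideanSpace ℝ (Fin n)), (0:ℝ)) = ((y, (0:ℝ))) - ((x, (0:ℝ))) := by
      simp [Prod.ext_iff]
    rw [this, map_sub]
  rw [hgsub]
  have h2 := key2 y hy
  have h3 : (v y - v x) * c ≤ g x - g y := by linarith
  have h4 : v y - v x ≤ (g x - g y) / c := (le_div_iff₀ hcpos).2 h3
  have h5 : -(c⁻¹ * (g y - g x)) = (g x - g y) / c := by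
    rw [div_eq_mul_inv]; ring
  linarith


lemma mem_dplus_of_supergrad {u : EuclideanSpace ℝ (Fin n) → ℝ} {U : Set (EuclideanSpace ℝ (Fin n))}
    {x : EuclideanSpace ℝ (Fin n)} {r C : ℝ} (hr : 0 < r)
    {p : EuclideanSpace ℝ (Fin n)}
    (hp : ∀ y ∈ Metric.ball x r, (fun y => u y - C/2 * ‖y - x‖^2) y
      ≤ (fun y => u y - C/2 * ‖y - x‖^2) x + (inner ℝ p (y - x) : ℝ)) :
    p ∈ DplusOn u U x := by
  intro ε hε
  set δ := min r (2 * ε / (|C| + 1)) with hδ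
  have hδpos : 0 < δ := lt_min hr (by positivity)
  have hball : Metric.ball x δ ∈ nhdsWithin x U :=
    nhdsWithin_le_nhds (Metric.ball_mem_nhds x hδpos)
  filter_upwards [hball] with y hy
  have hyr : y ∈ Metric.ball x r := Metric.ball_subset_ball (min_le_left _ _) hy
  have h1 := hp y hyr
  simp only [sub_self, norm_zero] at h1
  have hnorm : ‖y - x‖ < δ := by rw [← dist_eq_norm]; exact hy
  have hnn : 0 ≤ ‖y - x‖ := norm_nonneg _
  have h2 : C/2 * ‖y - x‖^2 ≤ |C|/2 * ‖y - x‖ * ‖y - x‖ := by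
    nlinarith [le_abs_self C, abs_nonneg C]
  have h3 : |C|/2 * ‖y - x‖ ≤ ε := by
    have hle : ‖y - x‖ ≤ 2 * ε / (|C| + 1) := hnorm.le.trans (min_le_right _ _)
    have h4 : |C|/2 * ‖y - x‖ ≤ |C|/2 * (2 * ε / (|C| + 1)) := by
      apply mul_le_mul_of_nonneg_left hle (by positivity)
    have h5 : |C|/2 * (2 * ε / (|C| + 1)) ≤ ε := by
      rw [div_mul_div_comm, div_le_iff₀ (by positivity : (0:ℝ) < 2 * (|C| + 1))]
      nlinarith [abs_nonneg C]
    linarith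
  nlinarith [mul_le_mul_of_nonneg_right h3 hnn]


lemma supergrad_of_mem_dplus {u : EuclideanSpace ℝ (Fin n) → ℝ} {U : Set (EuclideanSpace ℝ (Fin n))}
    {x : EuclideanSpace ℝ (Fin n)} {r C : ℝ} (hr : 0 < r) (hball : Metric.ball x r ⊆ U)
    (hconc : ConcaveOn ℝ (Metric.ball x r) (fun y => u y - C/2 * ‖y - x‖^2))
    {p : EuclideanSpace ℝ (Fin n)} (hp : p ∈ DplusOn u U x) :
    ∀ y ∈ Metric.ball x r, u y - C/2 * ‖y - x‖^2 ≤ u x + (inner ℝ p (y - x) : ℝ) := by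
  set v : EuclideanSpace ℝ (Fin n) → ℝ := fun y => u y - C/2 * ‖y - x‖^2 with hv
  clear_value v
  intro y hy
  have hxball : x ∈ Metric.ball x r := Metric.mem_ball_self hr
  rcases eq_or_ne y x with rfl | hyx
  · simp [hv]
  have hvx : v x = u x := by simp [hv]
  have hnylt : ‖y - x‖ < r := by rw [← dist_eq_norm]; exact hy
  have hny : 0 < ‖y - x‖ := by
    rw [norm_pos_iff]; exact sub_ne_zero.2 hyx
  -- suffices: for all ε > 0
  have hsuff : ∀ ε > 0, v y ≤ u x + (inner ℝ p (y - x) : ℝ) + ε := by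
    intro ε hε
    set ε₁ := ε / (2 * (‖y - x‖ + 1)) with hε₁
    clear_value ε₁
    have hε₁pos : 0 < ε₁ := by rw [hε₁]; positivity
    have hev := hp ε₁ hε₁pos
    -- the path s ↦ x + s • (y - x)
    set φ : ℝ → EuclideanSpace ℝ (Fin n) := fun s => x + s • (y - x) with hφ
    clear_value φ
    have hφc : Tendsto φ (𝓝[>] (0:ℝ)) (𝓝 x) := by
      have : Tendsto φ (𝓝 (0:ℝ)) (𝓝 x) := by
        have : Continuous φ := by continuity
        have h0 : φ 0 = x := by simp [hφ]
        simpa [h0] using this.tendsto 0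
      exact this.mono_left nhdsWithin_le_nhds
    have hmemball : ∀ s ∈ Ioc (0:ℝ) 1, φ s ∈ Metric.ball x r := by
      intro s hs
      rw [Metric.mem_ball, dist_eq_norm]
      have : φ s - x = s • (y - x) := by simp [hφ]
      rw [this, norm_smul, Real.norm_eq_abs, abs_of_pos hs.1]
      calc s * ‖y - x‖ ≤ 1 * ‖y - x‖ := by
            apply mul_le_mul_of_nonneg_right hs.2 (norm_nonneg _)
        _ < r := by rw [one_mul]; exact hnylt
    have hφU : Tendsto φ (𝓝[>] (0:ℝ)) (𝓝[U] x) := by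
      rw [tendsto_nhdsWithin_iff]
      refine ⟨hφc, ?_⟩
      filter_upwards [Ioc_mem_nhdsGT_of_mem (by norm_num : (0:ℝ) ∈ Ico (0:ℝ) 1)] with s hs
      exact hball (hmemball s hs)
    have hev2 : ∀ᶠ s in 𝓝[>] (0:ℝ),
        u (φ s) - u x - (inner ℝ p (φ s - x) : ℝ) ≤ ε₁ * ‖φ s - x‖ := hφU.eventually hev
    have hsmall : ∀ᶠ s in 𝓝[>] (0:ℝ), |C|/2 * s * ‖y - x‖^2 ≤ ε / 2 := by
      have htend : Tendsto (fun s : ℝ => |C|/2 * s * ‖y - x‖^2) (𝓝[>] (0:ℝ)) (𝓝 0) := by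
        have : Tendsto (fun s : ℝ => |C|/2 * s * ‖y - x‖^2) (𝓝 (0:ℝ)) (𝓝 (|C|/2 * 0 * ‖y - x‖^2)) := by
          apply Tendsto.mul_const
          exact tendsto_const_nhds.mul tendsto_id
        simpa using this.mono_left nhdsWithin_le_nhds
      exact htend.eventually_le_const (by positivity)
    have hIoc : ∀ᶠ s in 𝓝[>] (0:ℝ), s ∈ Ioc (0:ℝ) 1 :=
      Ioc_mem_nhdsGT_of_mem (by norm_num : (0:ℝ) ∈ Ico (0:ℝ) 1)
    obtain ⟨s, ⟨hs1, hsIoc⟩, hs3⟩ := ((hev2.and hIoc).and hsmall).exists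
    have hspos : 0 < s := hsIoc.1
    have hφx : φ s - x = s • (y - x) := by simp [hφ]
    have hnφ : ‖φ s - x‖ = s * ‖y - x‖ := by
      rw [hφx, norm_smul, Real.norm_eq_abs, abs_of_pos hspos]
    have hcomb : φ s = (1 - s) • x + s • y := by
      simp only [hφ]; module
    have hconc2 := hconc.2 hxball hy (by linarith [hsIoc.2] : (0:ℝ) ≤ 1 - s) hspos.le (by ring)
    rw [← hcomb] at hconc2
    simp only [smul_eq_mul] at hconc2
    have hvφ : v (φ s) = u (φ s) - C/2 * (s * ‖y - x‖)^2 := by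
      simp only [hv]; rw [hnφ]
    have hinner : (inner ℝ p (φ s - x) : ℝ) = s * (inner ℝ p (y - x) : ℝ) := by
      rw [hφx, real_inner_smul_right]
    rw [hinner, hnφ] at hs1
    have hC1 : - (C/2 * (s * ‖y - x‖)^2) ≤ s * (ε/2) := by
      have h1 : - (C/2 * (s * ‖y - x‖)^2) ≤ |C|/2 * s * ‖y - x‖^2 * s := by
        nlinarith [neg_abs_le C, abs_nonneg C, sq_nonneg (s * ‖y - x‖)]
      have h2 : |C|/2 * s * ‖y - x‖^2 * s ≤ ε/2 * s := mul_le_mul_of_nonneg_right hs3 hspos.le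
      linarith
    have hε₁b : ε₁ * ‖y - x‖ ≤ ε / 2 := by
      rw [hε₁, div_mul_eq_mul_div, div_le_div_iff₀ (by positivity) (by norm_num : (0:ℝ) < 2)]
      nlinarith [hny]
    rw [hvx] at hconc2
    have hfinal : s * (v y) ≤ s * (u x + (inner ℝ p (y - x) : ℝ) + ε) := by
      have h3 := mul_le_mul_of_nonneg_left hε₁b hspos.le
      linarith [hs1, hconc2, hC1, hvφ.le, hvφ.ge, h3]
    exact le_of_mul_le_mul_left hfinal hspos
  -- conclude from hsuff
  by_contra hlt
  push_neg at hlt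
  have hvy : u y - C / 2 * ‖y - x‖ ^ 2 = v y := by rw [hv]
  rw [hvy] at hlt
  obtain ⟨ε, hε, hεlt⟩ : ∃ ε > 0, u x + (inner ℝ p (y - x) : ℝ) + ε < v y :=
    ⟨(v y - (u x + inner ℝ p (y - x)))/2, by linarith, by linarith⟩
  exact absurd (hsuff ε hε) (by linarith)

lemma dplus_compact {u : EuclideanSpace ℝ (Fin n) → ℝ} {U : Set (EuclideanSpace ℝ (Fin n))}
    {x : EuclideanSpace ℝ (Fin n)} {r C : ℝ} (hr : 0 < r) (hball : Metric.ball x r ⊆ U)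
    (hconc : ConcaveOn ℝ (Metric.ball x r) (fun y => u y - C/2 * ‖y - x‖^2)) :
    IsCompact (DplusOn u U x) := by
  set v : EuclideanSpace ℝ (Fin n) → ℝ := fun y => u y - C/2 * ‖y - x‖^2 with hv
  clear_value v
  rw [hv] at hconc
  rw [← hv] at hconc
  have hvc : ContinuousOn v (Metric.ball x r) := hconc.continuousOn Metric.isOpen_ball
  have hsub : Metric.closedBall x (r/2) ⊆ Metric.ball x r :=
    Metric.closedBall_subset_ball (by linarith)
  obtain ⟨y₀, hy₀, hmin⟩ := (isCompact_closedBall x (r/2)).exists_isMinOn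
    ⟨x, Metric.mem_closedBall_self (by linarith)⟩ (hvc.mono hsub)
  set m := v y₀ with hm
  set R := max 0 (2 * (v x - m) / r) with hR
  have hbound : ∀ p ∈ DplusOn u U x, ‖p‖ ≤ R := by
    intro p hp
    rcases eq_or_ne p 0 with rfl | hp0
    · simp only [norm_zero, hR]
      exact le_max_left _ _
    have hnp : 0 < ‖p‖ := norm_pos_iff.2 hp0
    set w : EuclideanSpace ℝ (Fin n) := x - ((r/2) * ‖p‖⁻¹) • p with hw
    have hwx : w - x = -((r/2) * ‖p‖⁻¹) • p := by rw [hw]; rw [neg_smul]; abel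
    have hnw : ‖w - x‖ = r/2 := by
      rw [hwx, norm_smul, Real.norm_eq_abs, abs_neg, abs_of_pos (by positivity)]
      field_simp
    have hwball : w ∈ Metric.ball x r := by
      rw [Metric.mem_ball, dist_eq_norm, hnw]; linarith
    have hwcb : w ∈ Metric.closedBall x (r/2) := by
      rw [Metric.mem_closedBall, dist_eq_norm, hnw]
    have hvx : v x = u x := by rw [hv]; simp
    have hsg := supergrad_of_mem_dplus hr hball (hv ▸ hconc) hp w hwball
    have hvw : v w ≤ v x + (inner ℝ p (w - x) : ℝ) := by
      simp only [hv]
      simpa using hsg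
    have hinner : (inner ℝ p (w - x) : ℝ) = -(r/2) * ‖p‖ := by
      rw [hwx, real_inner_smul_right, real_inner_self_eq_norm_sq]
      field_simp
    have hmw : m ≤ v w := hmin hwcb
    have h1 : ‖p‖ ≤ 2 * (v x - m) / r := by
      rw [le_div_iff₀ hr]
      nlinarith [hvw, hinner, hmw]
    exact h1.trans (le_max_right _ _)
  apply IsCompact.of_isClosed_subset (isCompact_closedBall (0:EuclideanSpace ℝ (Fin n)) R)
    (dplus_closed u U x)
  intro p hp
  rw [Metric.mem_closedBall, dist_zero_right]
  exact hbound p hp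

end Aux

theorem min_superdifferential_of_viscosity_solution {n : ℕ}
    (Ω : Set (EuclideanSpace ℝ (Fin n))) (hΩopen : IsOpen Ω) (hΩconn : IsConnected Ω)
    (H : EuclideanSpace ℝ (Fin n) → EuclideanSpace ℝ (Fin n) → ℝ → ℝ)
    (u : EuclideanSpace ℝ (Fin n) → ℝ)
    -- `H` is `C¹` and strictly convex in `p`
    (hH : ContDiff ℝ 1 (fun q : (EuclideanSpace ℝ (Fin n) × EuclideanSpace ℝ (Fin n)) × ℝ =>
      H q.1.1 q.1.2 q.2))
    (hHconv : ∀ x w, StrictConvexOn ℝ Set.univ (fun p => H x p w))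
    -- `u` is a (semiconcave) viscosity solution: locally semiconcave and solves the
    -- equation almost everywhere
    (husc : LocallySemiconcaveOn u Ω)
    (hae : ∀ᵐ x ∂(volume.restrict Ω), DifferentiableAt ℝ u x ∧ H x (gradient u x) (u x) = 0)
    -- the structural identity `ext(D⁺u(x)) = D*u(x) = {p ∈ D⁺u(x) : H(x,p,u(x)) = 0}`
    (hstruct : ∀ x ∈ Ω,
      Set.extremePoints ℝ (DplusOn u Ω x) = Dstar u Ω x ∧
      Dstar u Ω x = {p ∈ DplusOn u Ω x | H x p (u x) = 0}) :
    ∀ x ∈ Ω,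
      (∃! p, p ∈ DplusOn u Ω x ∧ ∀ q ∈ DplusOn u Ω x, H x p (u x) ≤ H x q (u x)) ∧
      (¬(∃ p, DplusOn u Ω x = {p}) →
        ∀ p, (p ∈ DplusOn u Ω x ∧ ∀ q ∈ DplusOn u Ω x, H x p (u x) ≤ H x q (u x)) →
          H x p (u x) < 0 ∧ p ∈ DplusOn u Ω x \ Dstar u Ω x) := by
  intro x hx
  obtain ⟨r, hr, C, hball, hsc⟩ := husc x hx
  have hconc := concave_of_semiconcave hsc
  set K := DplusOn u Ω x with hK
  clear_value K
  have hKconv : Convex ℝ K := by rw [hK]; exact dplus_convex u Ω x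
  have hKcomp : IsCompact K := by rw [hK]; exact dplus_compact hr hball hconc
  have hKne : K.Nonempty := by
    rw [hK]
    obtain ⟨p, hp⟩ := exists_supergradient Metric.isOpen_ball hconc (Metric.mem_ball_self hr)
    exact ⟨p, mem_dplus_of_supergrad hr hp⟩
  have hfc : Continuous (fun p => H x p (u x)) := by
    have h1 : Continuous (fun q : (EuclideanSpace ℝ (Fin n) × EuclideanSpace ℝ (Fin n)) × ℝ =>
        H q.1.1 q.1.2 q.2) := hH.continuous
    exact h1.comp (((continuous_const.prodMk continuous_id).prodMk continuous_const))
  obtain ⟨p₀, hp₀K, hp₀min⟩ := hKcomp.exists_isMinOn hKne hfc.continuousOn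
  have hp₀min2 : ∀ q ∈ K, H x p₀ (u x) ≤ H x q (u x) := fun q hq => hp₀min hq
  have huniq : ∀ p₁, (p₁ ∈ K ∧ ∀ q ∈ K, H x p₁ (u x) ≤ H x q (u x)) → p₁ = p₀ := by
    rintro p₁ ⟨hp₁K, hp₁min⟩
    by_contra hne
    have hmid : (1/2 : ℝ) • p₁ + (1/2 : ℝ) • p₀ ∈ K :=
      hKconv hp₁K hp₀K (by norm_num) (by norm_num) (by norm_num)
    have hstrict := (hHconv x (u x)).2 (Set.mem_univ p₁) (Set.mem_univ p₀) hne
      (by norm_num : (0:ℝ) < 1/2) (by norm_num : (0:ℝ) < 1/2) (by norm_num)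
    simp only [smul_eq_mul] at hstrict
    have h1 := hp₁min _ hmid
    have h2 := hp₀min2 _ hmid
    linarith
  refine ⟨⟨p₀, ⟨hp₀K, hp₀min2⟩, huniq⟩, ?_⟩
  intro hns p hpmin
  have hpp₀ : p = p₀ := huniq p hpmin
  subst hpp₀
  obtain ⟨hs1, hs2⟩ := hstruct x hx
  rw [← hK] at hs1 hs2
  obtain ⟨e, he⟩ := hKcomp.extremePoints_nonempty hKne
  have hKM := closure_convexHull_extremePoints hKcomp hKconv
  have htwo : ∃ e₂ ∈ Set.extremePoints ℝ K, e₂ ≠ e := by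
    by_contra hcon
    push_neg at hcon
    have hsub2 : Set.extremePoints ℝ K ⊆ {e} := fun q hq => hcon q hq
    have hKe : K ⊆ {e} := by
      rw [← hKM]
      have h1 : convexHull ℝ (Set.extremePoints ℝ K) ⊆ {e} := by
        rw [← convexHull_singleton (𝕜 := ℝ) e]
        exact convexHull_mono hsub2
      calc closure (convexHull ℝ (Set.extremePoints ℝ K)) ⊆ closure {e} := closure_mono h1
        _ = {e} := closure_singleton
    exact hns ⟨e, Set.Subset.antisymm hKe (by simpa using he.1)⟩
  obtain ⟨e₂, he₂, hne⟩ := htwo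
  have hzero : ∀ q ∈ Set.extremePoints ℝ K, H x q (u x) = 0 ∧ q ∈ K := by
    intro q hq
    rw [hs1, hs2] at hq
    exact ⟨hq.2, hq.1⟩
  obtain ⟨he0, heK⟩ := hzero e he
  obtain ⟨he₂0, he₂K⟩ := hzero e₂ he₂
  have hmid : (1/2 : ℝ) • e₂ + (1/2 : ℝ) • e ∈ K :=
    hKconv he₂K heK (by norm_num) (by norm_num) (by norm_num)
  have hstrict := (hHconv x (u x)).2 (Set.mem_univ e₂) (Set.mem_univ e) hne
    (by norm_num : (0:ℝ) < 1/2) (by norm_num : (0:ℝ) < 1/2) (by norm_num)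
  simp only [smul_eq_mul] at hstrict
  have hmidlt : H x ((1/2 : ℝ) • e₂ + (1/2 : ℝ) • e) (u x) < 0 := by
    rw [he0, he₂0] at hstrict
    linarith
  have hplt : H x p (u x) < 0 := lt_of_le_of_lt (hpmin.2 _ hmid) hmidlt
  refine ⟨hplt, hp₀K, ?_⟩
  rw [hs2]
  rintro ⟨-, h0⟩
  linarith
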